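/- arXiv:2012.05112 — 2 statements merged into one kernel-verified Lean document; each statement's English description precedes it below -/
import Mathlib

section
/- For every prime q, the following holds: every graph G containing the complete graph K_{4q−2} as a minor, whose edges carry weights in ℤ/qℤ, contains a cycle whose total weight (the sum of the weights of its edges) is congruent to 0 modulo q. -/
open SimpleGraph

/-- A graph `G` contains the complete graph `K_n` as a minor. -/
def HasCliqueMinor {V : Type*} (G : SimpleGraph V) (n : ℕ) : Prop :=
  ∃ B : Fin n → Set V,
    (∀ i, (B i).Nonempty) ∧
    (∀ i, (G.induce (B i)).Connected) ∧
    (∀ i j, i ≠ j → Disjoint (B i) (B j)) ∧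
    (∀ i j, i ≠ j → ∃ u ∈ B i, ∃ v ∈ B j, G.Adj u v)

/-- The weight of a walk in a graph whose edges are weighted by `w` (given as a
symmetric function on ordered pairs of vertices). -/
def walkWeight {V : Type*} {G : SimpleGraph V} {q : ℕ} (w : V → V → ZMod q)
    {u v : V} (p : G.Walk u v) : ZMod q :=
  (p.darts.map fun d => w d.toProd.1 d.toProd.2).sum

namespace ZeroSumAux

/-! ### Sums along lists -/

variable {q : ℕ}

/-- Sum of `g` along consecutive pairs of a list. -/
def pathSum (g : ℕ → ℕ → ZMod q) : List ℕ → ZMod q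
  | [] => 0
  | [_] => 0
  | x :: y :: l => g x y + pathSum g (y :: l)

/-- Cyclic sum of `g` along a list. -/
def cycSum (g : ℕ → ℕ → ZMod q) : List ℕ → ZMod q
  | [] => 0
  | x :: l => pathSum g (x :: l) + g ((x :: l).getLastD 0) x

lemma pathSum_concat (g : ℕ → ℕ → ZMod q) :
    ∀ (l : List ℕ) (a v : ℕ),
      pathSum g ((a :: l) ++ [v]) = pathSum g (a :: l) + g ((a :: l).getLastD 0) v := by
  intro l
  induction l with
  | nil => intro a v; simp [pathSum]
  | cons b t ih =>
    intro a v
    calc pathSum g ((a :: b :: t) ++ [v])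
        = g a b + pathSum g ((b :: t) ++ [v]) := rfl
      _ = g a b + (pathSum g (b :: t) + g ((b :: t).getLastD 0) v) := by rw [ih]
      _ = (g a b + pathSum g (b :: t)) + g ((b :: t).getLastD 0) v := by ring
      _ = pathSum g (a :: b :: t) + g ((a :: b :: t).getLastD 0) v := by
            show _ = (g a b + pathSum g (b :: t)) + g ((a :: b :: t).getLastD 0) v
            rw [List.getLastD_cons, List.getLastD_cons, List.getLastD_cons]

/-! ### The abstract zero-sum cycle lemma for complete digraphs on `2q-1` vertices -/

lemma exists_zero_cycSum (hq : q.Prime) (g : ℕ → ℕ → ZMod q) :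
    ∃ L : List ℕ, L.Nodup ∧ 2 ≤ L.length ∧ (∀ v ∈ L, v < 2 * q - 1) ∧ cycSum g L = 0 := by
  haveI : Fact q.Prime := ⟨hq⟩
  haveI : NeZero q := ⟨hq.ne_zero⟩
  have hq2 : 2 ≤ q := hq.two_le
  by_cases h2 : ∃ x y : ℕ, x < 2 * q - 1 ∧ y < 2 * q - 1 ∧ x ≠ y ∧ g x y + g y x = 0
  · obtain ⟨x, y, hx, hy, hxy, h0⟩ := h2
    refine ⟨[x, y], by simp [hxy], by simp, ?_, ?_⟩
    · intro v hv
      rcases List.mem_pair.mp hv with rfl | rfl <;> assumption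
    · show pathSum g [x, y] + g ([x, y].getLastD 0) x = 0
      show (g x y + pathSum g [y]) + g y x = 0
      show (g x y + 0) + g y x = 0
      rw [add_zero]; exact h0
  push_neg at h2
  have key : ∀ k : ℕ, k ≤ q - 1 → ∃ (e : ℕ) (Bs : Finset (ZMod q)),
      e ≤ 2 * k ∧ min q (k + 1) ≤ Bs.card ∧
      ∀ z ∈ Bs, ∃ l : List ℕ, (0 :: l).Nodup ∧ (∀ v ∈ l, 1 ≤ v ∧ v ≤ 2 * k) ∧
        ((0 :: l).getLastD 0 = e) ∧ k ≤ l.length ∧ pathSum g (0 :: l) = z := by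
    intro k
    induction k with
    | zero =>
      intro _
      refine ⟨0, {0}, le_rfl, by simp, ?_⟩
      intro z hz
      rw [Finset.mem_singleton] at hz
      exact ⟨[], by simp, by simp, by simp, by simp, by simp [pathSum, hz]⟩
    | succ k ih =>
      intro hk1
      obtain ⟨e, Bs, he, hcard, hreal⟩ := ih (by omega)
      have hBsne : Bs.Nonempty := by
        apply Finset.card_pos.mp
        have : 1 ≤ min q (k + 1) := by omega
        omega
      have hxlt : 2 * k + 1 < 2 * q - 1 := by omega
      have hylt : 2 * k + 2 < 2 * q - 1 := by omega
      have hsum_ne : g (2 * k + 1) (2 * k + 2) + g (2 * k + 2) (2 * k + 1) ≠ 0 :=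
        h2 _ _ hxlt hylt (by omega)
      have step : ∀ m' e' : ℕ,
          (m' = 2 * k + 1 ∧ e' = 2 * k + 2) ∨ (m' = 2 * k + 2 ∧ e' = 2 * k + 1) →
          (g e m' + g m' e') - g e e' ≠ 0 →
          ∃ (e2 : ℕ) (Bs2 : Finset (ZMod q)),
            e2 ≤ 2 * (k + 1) ∧ min q (k + 1 + 1) ≤ Bs2.card ∧
            ∀ z ∈ Bs2, ∃ l : List ℕ, (0 :: l).Nodup ∧
              (∀ v ∈ l, 1 ≤ v ∧ v ≤ 2 * (k + 1)) ∧
              ((0 :: l).getLastD 0 = e2) ∧ k + 1 ≤ l.length ∧ pathSum g (0 :: l) = z := by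
        intro m' e' hcase halpha
        have hm'range : 2 * k + 1 ≤ m' ∧ m' ≤ 2 * (k + 1) := by
          rcases hcase with ⟨rfl, _⟩ | ⟨rfl, _⟩ <;> omega
        have he'range : 2 * k + 1 ≤ e' ∧ e' ≤ 2 * (k + 1) := by
          rcases hcase with ⟨_, rfl⟩ | ⟨_, rfl⟩ <;> omega
        have hm'e' : m' ≠ e' := by
          rcases hcase with ⟨rfl, rfl⟩ | ⟨rfl, rfl⟩ <;> omega
        refine ⟨e', Bs.image (· + g e e') ∪ Bs.image (· + (g e m' + g m' e')),
          he'range.2, ?_, ?_⟩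
        · by_cases heq : Bs.image (· + g e e') = Bs.image (· + (g e m' + g m' e'))
          · have hstep : ∀ z ∈ Bs, z + ((g e m' + g m' e') - g e e') ∈ Bs := by
              intro z hz
              have h1 : z + (g e m' + g m' e') ∈ Bs.image (· + (g e m' + g m' e')) :=
                Finset.mem_image_of_mem _ hz
              rw [← heq] at h1
              obtain ⟨z', hz', hz'eq⟩ := Finset.mem_image.mp h1
              have hz'' : z' = z + ((g e m' + g m' e') - g e e') := by
                have h3 : z' + g e e' = z + (g e m' + g m' e') := hz'eq
                linear_combination h3
              rwa [← hz'']
            have hiter : ∀ (m : ℕ) (z : ZMod q), z ∈ Bs →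
                z + m • ((g e m' + g m' e') - g e e') ∈ Bs := by
              intro m
              induction m with
              | zero => intro z hz; simpa using hz
              | succ m ihm =>
                intro z hz
                have h4 := hstep _ (ihm z hz)
                rw [succ_nsmul, ← add_assoc]
                exact h4
            have huniv : ∀ t : ZMod q, t ∈ Bs := by
              obtain ⟨z₀, hz₀⟩ := hBsne
              intro t
              have h5 := hiter (((t - z₀) * ((g e m' + g m' e') - g e e')⁻¹).val) z₀ hz₀
              have hval : ((((t - z₀) * ((g e m' + g m' e') - g e e')⁻¹).val : ℕ) : ZMod q) =
                  (t - z₀) * ((g e m' + g m' e') - g e e')⁻¹ := ZMod.natCast_rightInverse _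
              rw [nsmul_eq_mul, hval, mul_assoc, inv_mul_cancel₀ halpha] at h5
              simpa using h5
            have hcardq : Bs.card = q := by
              have h1 : Bs = Finset.univ := Finset.eq_univ_iff_forall.mpr huniv
              rw [h1, Finset.card_univ, ZMod.card]
            have h3 : Bs.card ≤ (Bs.image (· + g e e') ∪
                Bs.image (· + (g e m' + g m' e'))).card := by
              calc Bs.card = (Bs.image (· + g e e')).card :=
                    (Finset.card_image_of_injective _ (add_left_injective _)).symm
                _ ≤ _ := Finset.card_le_card Finset.subset_union_left
            omega
          · have hc : (Bs.image (· + g e e')).card = Bs.card :=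
              Finset.card_image_of_injective _ (add_left_injective _)
            have hc' : (Bs.image (· + (g e m' + g m' e'))).card = Bs.card :=
              Finset.card_image_of_injective _ (add_left_injective _)
            have hnsub : ¬ Bs.image (· + (g e m' + g m' e')) ⊆ Bs.image (· + g e e') := by
              intro hsub
              exact heq (Finset.eq_of_subset_of_card_le hsub (by omega)).symm
            obtain ⟨t, ht, htn⟩ := Finset.not_subset.mp hnsub
            have hins : insert t (Bs.image (· + g e e')) ⊆
                Bs.image (· + g e e') ∪ Bs.image (· + (g e m' + g m' e')) := by
              intro a ha
              rcases Finset.mem_insert.mp ha with rfl | ha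
              · exact Finset.mem_union_right _ ht
              · exact Finset.mem_union_left _ ha
            have h4 := Finset.card_le_card hins
            rw [Finset.card_insert_of_notMem htn, hc] at h4
            omega
        · intro z hz
          rw [Finset.mem_union] at hz
          rcases hz with hz | hz
          · obtain ⟨z', hz', rfl⟩ := Finset.mem_image.mp hz
            obtain ⟨l, hnd, hbd, hlast, hlen, hsum⟩ := hreal z' hz'
            have hemem : e' ∉ (0 :: l) := by
              intro hmem
              rcases List.mem_cons.mp hmem with h | h
              · omega
              · have := hbd e' h; omega
            refine ⟨l ++ [e'], ?_, ?_, ?_, ?_, ?_⟩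
            · have h5 : (0 :: (l ++ [e'])) = (0 :: l) ++ [e'] := by simp
              rw [h5]
              exact List.Nodup.append hnd (List.nodup_singleton e')
                (fun a ha hb => hemem (by rwa [List.mem_singleton.mp hb] at ha))
            · intro v hv
              rcases List.mem_append.mp hv with h | h
              · have := hbd v h; omega
              · rw [List.mem_singleton] at h; omega
            · show ((0 :: l) ++ [e']).getLastD 0 = e'
              exact List.getLastD_concat
            · rw [List.length_append]; simp; omega
            · show pathSum g ((0 :: l) ++ [e']) = z' + g e e'
              rw [pathSum_concat, hsum, hlast]
          · obtain ⟨z', hz', rfl⟩ := Finset.mem_image.mp hz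
            obtain ⟨l, hnd, hbd, hlast, hlen, hsum⟩ := hreal z' hz'
            have hemem : e' ∉ (0 :: l) := by
              intro hmem
              rcases List.mem_cons.mp hmem with h | h
              · omega
              · have := hbd e' h; omega
            have hmmem : m' ∉ (0 :: l) := by
              intro hmem
              rcases List.mem_cons.mp hmem with h | h
              · omega
              · have := hbd m' h; omega
            refine ⟨l ++ [m', e'], ?_, ?_, ?_, ?_, ?_⟩
            · have h5 : (0 :: (l ++ [m', e'])) = (0 :: l) ++ [m', e'] := by simp
              rw [h5]
              refine List.Nodup.append hnd (by simp [hm'e']) ?_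
              intro a ha hb
              rcases List.mem_pair.mp hb with rfl | rfl
              · exact hmmem ha
              · exact hemem ha
            · intro v hv
              rcases List.mem_append.mp hv with h | h
              · have := hbd v h; omega
              · rcases List.mem_pair.mp h with rfl | rfl <;> omega
            · show ((0 :: l) ++ [m', e']).getLastD 0 = e'
              have h6 : (0 :: l) ++ [m', e'] = ((0 :: l) ++ [m']) ++ [e'] := by simp
              rw [h6]
              exact List.getLastD_concat
            · rw [List.length_append]; simp; omega
            · show pathSum g ((0 :: l) ++ [m', e']) = z' + (g e m' + g m' e')
              have hA : pathSum g ((0 :: l) ++ [m']) = z' + g e m' := by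
                rw [pathSum_concat, hsum, hlast]
              have hAlast : ((0 :: l) ++ [m']).getLastD 0 = m' := List.getLastD_concat
              have h6 : (0 :: l) ++ [m', e'] = ((0 :: l) ++ [m']) ++ [e'] := by simp
              rw [h6]
              have h7 : ((0 :: l) ++ [m']) = 0 :: (l ++ [m']) := by simp
              rw [h7] at hA hAlast ⊢
              rw [pathSum_concat, hA, hAlast]
              ring
      by_cases hα : (g e (2 * k + 1) + g (2 * k + 1) (2 * k + 2)) - g e (2 * k + 2) ≠ 0
      · exact step (2 * k + 1) (2 * k + 2) (Or.inl ⟨rfl, rfl⟩) hα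
      · apply step (2 * k + 2) (2 * k + 1) (Or.inr ⟨rfl, rfl⟩)
        push_neg at hα
        intro h
        apply hsum_ne
        linear_combination hα + h
  obtain ⟨e, Bs, he, hcard, hreal⟩ := key (q - 1) le_rfl
  have hBsuniv : Bs = Finset.univ := by
    apply Finset.eq_univ_of_card
    have h1 : Fintype.card (ZMod q) = q := ZMod.card q
    have h2 : Bs.card ≤ Fintype.card (ZMod q) := Finset.card_le_univ _
    rw [h1] at h2 ⊢
    omega
  have hz : (- g e 0) ∈ Bs := by rw [hBsuniv]; exact Finset.mem_univ _
  obtain ⟨l, hnd, hbd, hlast, hlen, hsum⟩ := hreal _ hz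
  refine ⟨0 :: l, hnd, ?_, ?_, ?_⟩
  · show 2 ≤ l.length + 1
    omega
  · intro v hv
    rcases List.mem_cons.mp hv with rfl | h
    · omega
    · have := hbd v h; omega
  · show pathSum g (0 :: l) + g ((0 :: l).getLastD 0) 0 = 0
    rw [hsum, hlast]
    ring

/-! ### Walk helpers -/

section WalkHelpers

variable {V : Type} {G : SimpleGraph V} (w : V → V → ZMod q)

lemma walkWeight_cons {u v x : V} (h : G.Adj u v) (p : G.Walk v x) :
    walkWeight w (Walk.cons h p) = w u v + walkWeight w p := by
  simp [walkWeight, Walk.darts_cons]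

lemma walkWeight_append {u v x : V} (p : G.Walk u v) (p' : G.Walk v x) :
    walkWeight w (p.append p') = walkWeight w p + walkWeight w p' := by
  simp [walkWeight, Walk.darts_append]

lemma closing_not_mem_edges {a b : V} (p : G.Walk a b) (hp : p.IsPath) (hl : 2 ≤ p.length) :
    s(b, a) ∉ p.edges := by
  intro hmem
  cases p with
  | nil => simp at hl
  | @cons _ c _ h p' =>
    rw [Walk.edges_cons, List.mem_cons] at hmem
    have hp' : p'.IsPath := hp.of_cons
    have hnotmem : a ∉ p'.support := ((Walk.cons_isPath_iff h p').mp hp).2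
    rcases hmem with heq | hmem'
    · rw [Sym2.eq_iff] at heq
      rcases heq with ⟨hba, -⟩ | ⟨hbc, -⟩
      · exact hnotmem (hba ▸ Walk.end_mem_support p')
      · cases p' with
        | nil => simp [Walk.length_cons] at hl
        | @cons _ d _ h2 p2 =>
          have hnm : c ∉ p2.support := ((Walk.cons_isPath_iff h2 p2).mp hp').2
          apply hnm
          rw [← hbc]
          exact Walk.end_mem_support p2
    · exact hnotmem (Walk.snd_mem_support_of_mem_edges p' hmem')

end WalkHelpers

/-! ### blob-structure sums -/

def msum (A : ℕ → ℕ → ZMod q) (I : ℕ → ZMod q) (Bw C : ℕ → ℕ → ZMod q) :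
    ℕ → List ℕ → ℕ → ZMod q
  | _, [], _ => 0
  | p, [k], f => A k p + I k + Bw k f
  | p, k :: k' :: t, f => (A k p + I k + Bw k k') + C k k' + msum A I Bw C k (k' :: t) f

lemma msum_eq_pathSum (A : ℕ → ℕ → ZMod q) (I : ℕ → ZMod q) (Bw C g : ℕ → ℕ → ZMod q)
    (hg : ∀ k m, g k m = Bw k m + C k m + (A m k + I m)) :
    ∀ (l : List ℕ) (k p f : ℕ),
      msum A I Bw C p (k :: l) f =
        (A k p + I k) + pathSum g (k :: l) + Bw ((k :: l).getLastD 0) f := by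
  intro l
  induction l with
  | nil =>
    intro k p f
    show A k p + I k + Bw k f = A k p + I k + (0 : ZMod q) + Bw k f
    ring
  | cons k' t ih =>
    intro k p f
    show (A k p + I k + Bw k k') + C k k' + msum A I Bw C k (k' :: t) f =
        (A k p + I k) + (g k k' + pathSum g (k' :: t)) + Bw ((k :: k' :: t).getLastD 0) f
    rw [ih k' k f, hg k k']
    simp only [List.getLastD_cons]
    ring

lemma getLastD_mem : ∀ (l : List ℕ) (k d : ℕ), (k :: l).getLastD d ∈ k :: l := by
  intro l
  induction l with
  | nil => intro k d; simp
  | cons b t ih =>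
    intro k d
    rw [List.getLastD_cons]
    exact List.mem_cons_of_mem _ (ih b k)

/-! ### The graph side -/

section Graph

variable {V : Type} {G : SimpleGraph V}

/-- entry point of blob `k` when the previous blob is `p` -/
def xin (ev : ℕ → ℕ → V) (k p : ℕ) : V := ev (2 * p + 1) (2 * k)
/-- internal exit of the `a`-part of blob `k` -/
def sv (eu : ℕ → ℕ → V) (k : ℕ) : V := eu (2 * k) (2 * k + 1)
/-- internal entry of the `b`-part of blob `k` -/
def tv (ev : ℕ → ℕ → V) (k : ℕ) : V := ev (2 * k) (2 * k + 1)
/-- exit point of blob `k` when the next blob is `m` -/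
def yout (eu : ℕ → ℕ → V) (k m : ℕ) : V := eu (2 * k + 1) (2 * m)

/-- The main graph-side construction. -/
lemma graph_side (hq : q.Prime) (w : V → V → ZMod q) (S : ℕ → Set V)
    (eu ev : ℕ → ℕ → V)
    (hdisjS : ∀ i j : ℕ, i < 4 * q - 2 → j < 4 * q - 2 → i ≠ j → Disjoint (S i) (S j))
    (heu : ∀ i j, eu i j ∈ S i) (hev : ∀ i j, ev i j ∈ S j)
    (heuv : ∀ i j : ℕ, i < 4 * q - 2 → j < 4 * q - 2 → i ≠ j → G.Adj (eu i j) (ev i j))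
    (pth : ∀ (i : ℕ) (x y : V), x ∈ S i → y ∈ S i → G.Walk x y)
    (hpthP : ∀ i x y hx hy, (pth i x y hx hy).IsPath)
    (hpthS : ∀ i x y hx hy, ∀ z ∈ (pth i x y hx hy).support, z ∈ S i) :
    ∃ (u : V) (c : G.Walk u u), c.IsCycle ∧ walkWeight w c = 0 := by
  have hq2 : 2 ≤ q := hq.two_le
  have hint : ∀ k : ℕ, k < 2 * q - 1 → G.Adj (sv eu k) (tv ev k) := by
    intro k hk
    exact heuv (2 * k) (2 * k + 1) (by omega) (by omega) (by omega)
  have hconn2 : ∀ k m : ℕ, k < 2 * q - 1 → m < 2 * q - 1 →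
      G.Adj (yout eu k m) (xin ev m k) := by
    intro k m hk hm
    exact heuv (2 * k + 1) (2 * m) (by omega) (by omega) (by omega)
  -- memberships
  have hxinS : ∀ k p : ℕ, xin ev k p ∈ S (2 * k) := fun k p => hev _ _
  have hsvS : ∀ k : ℕ, sv eu k ∈ S (2 * k) := fun k => heu _ _
  have htvS : ∀ k : ℕ, tv ev k ∈ S (2 * k + 1) := fun k => hev _ _
  have hyoutS : ∀ k m : ℕ, yout eu k m ∈ S (2 * k + 1) := fun k m => heu _ _
  -- opaque weight functions
  obtain ⟨Aw, hAw⟩ : ∃ f : ℕ → ℕ → ZMod q, ∀ k p, f k p =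
      walkWeight w (pth (2 * k) (xin ev k p) (sv eu k) (hxinS k p) (hsvS k)) :=
    ⟨_, fun _ _ => rfl⟩
  obtain ⟨Bww, hBww⟩ : ∃ f : ℕ → ℕ → ZMod q, ∀ k m, f k m =
      walkWeight w (pth (2 * k + 1) (tv ev k) (yout eu k m) (htvS k) (hyoutS k m)) :=
    ⟨_, fun _ _ => rfl⟩
  obtain ⟨Iw, hIw⟩ : ∃ f : ℕ → ZMod q, ∀ k, f k = w (sv eu k) (tv ev k) := ⟨_, fun _ => rfl⟩
  obtain ⟨Cww, hCww⟩ : ∃ f : ℕ → ℕ → ZMod q, ∀ k m, f k m = w (yout eu k m) (xin ev m k) :=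
    ⟨_, fun _ _ => rfl⟩
  obtain ⟨g, hg⟩ : ∃ f : ℕ → ℕ → ZMod q, ∀ k m, f k m =
      Bww k m + Cww k m + (Aw m k + Iw m) := ⟨_, fun _ _ => rfl⟩
  -- blob walks
  have blobP : ∀ k p m : ℕ, k < 2 * q - 1 →
      ∃ wb : G.Walk (xin ev k p) (yout eu k m), wb.IsPath ∧
        (∀ z ∈ wb.support, z ∈ S (2 * k) ∪ S (2 * k + 1)) ∧
        walkWeight w wb = Aw k p + Iw k + Bww k m ∧ 1 ≤ wb.length := by
    intro k p m hk
    refine ⟨(pth (2 * k) (xin ev k p) (sv eu k) (hxinS k p) (hsvS k)).append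
      (Walk.cons (hint k hk)
        (pth (2 * k + 1) (tv ev k) (yout eu k m) (htvS k) (hyoutS k m))), ?_, ?_, ?_, ?_⟩
    · rw [Walk.isPath_def, Walk.support_append, Walk.support_cons, List.tail_cons]
      refine List.Nodup.append (hpthP _ _ _ _ _).support_nodup
        (hpthP _ _ _ _ _).support_nodup ?_
      intro z hz1 hz2
      have h1 : z ∈ S (2 * k) := hpthS _ _ _ _ _ z hz1
      have h2 : z ∈ S (2 * k + 1) := hpthS _ _ _ _ _ z hz2
      exact Set.disjoint_left.mp
        (hdisjS (2 * k) (2 * k + 1) (by omega) (by omega) (by omega)) h1 h2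
    · intro z hz
      rw [Walk.support_append, Walk.support_cons, List.tail_cons, List.mem_append] at hz
      rcases hz with hz | hz
      · exact Or.inl (hpthS _ _ _ _ _ z hz)
      · exact Or.inr (hpthS _ _ _ _ _ z hz)
    · rw [walkWeight_append, walkWeight_cons, hAw, hIw, hBww]
      ring
    · rw [Walk.length_append, Walk.length_cons]
      omega
  -- pairwise blob disjointness
  have blobdisj : ∀ k m : ℕ, k < 2 * q - 1 → m < 2 * q - 1 → k ≠ m → ∀ z : V,
      z ∈ S (2 * k) ∪ S (2 * k + 1) → z ∈ S (2 * m) ∪ S (2 * m + 1) → False := by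
    intro k m hk hm hkm z hz1 hz2
    rcases hz1 with h1 | h1 <;> rcases hz2 with h2 | h2
    · exact Set.disjoint_left.mp
        (hdisjS (2 * k) (2 * m) (by omega) (by omega) (by omega)) h1 h2
    · exact Set.disjoint_left.mp
        (hdisjS (2 * k) (2 * m + 1) (by omega) (by omega) (by omega)) h1 h2
    · exact Set.disjoint_left.mp
        (hdisjS (2 * k + 1) (2 * m) (by omega) (by omega) (by omega)) h1 h2
    · exact Set.disjoint_left.mp
        (hdisjS (2 * k + 1) (2 * m + 1) (by omega) (by omega) (by omega)) h1 h2
  -- the chain of blobs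
  have chainP : ∀ (l : List ℕ), ∀ k p f : ℕ, (k :: l).Nodup →
      (∀ v ∈ k :: l, v < 2 * q - 1) →
      ∃ wc : G.Walk (xin ev k p) (yout eu ((k :: l).getLastD 0) f),
        wc.IsPath ∧ (∀ z ∈ wc.support, ∃ m ∈ k :: l, z ∈ S (2 * m) ∪ S (2 * m + 1)) ∧
        walkWeight w wc = msum Aw Iw Bww Cww p (k :: l) f ∧
        (k :: l).length ≤ wc.length := by
    intro l
    induction l with
    | nil =>
      intro k p f _ hbd
      obtain ⟨wb, h1, h2, h3, h4⟩ := blobP k p f (hbd k (by simp))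
      refine ⟨wb, h1, ?_, h3, ?_⟩
      · intro z hz
        exact ⟨k, by simp, h2 z hz⟩
      · exact h4
    | cons k' t ih =>
      intro k p f hnd hbd
      have hk : k < 2 * q - 1 := hbd k (by simp)
      have hnd' : (k' :: t).Nodup := hnd.of_cons
      have hbd' : ∀ v ∈ k' :: t, v < 2 * q - 1 := fun v hv => hbd v (List.mem_cons_of_mem _ hv)
      obtain ⟨wc, hc1, hc2, hc3, hc4⟩ := ih k' k f hnd' hbd'
      obtain ⟨wb, h1, h2, h3, h4⟩ := blobP k p k' hk
      have hclast : ((k :: k' :: t).getLastD 0) = ((k' :: t).getLastD 0) := by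
        simp only [List.getLastD_cons]
      rw [hclast]
      have hknotin : k ∉ k' :: t := (List.nodup_cons.mp hnd).1
      refine ⟨wb.append (Walk.cons (hconn2 k k' hk (hbd' k' (by simp))) wc), ?_, ?_, ?_, ?_⟩
      · rw [Walk.isPath_def, Walk.support_append, Walk.support_cons, List.tail_cons]
        refine List.Nodup.append h1.support_nodup hc1.support_nodup ?_
        intro z hz1 hz2
        obtain ⟨m, hm, hzm⟩ := hc2 z hz2
        exact blobdisj k m hk (hbd' m hm) (fun hkm => hknotin (hkm ▸ hm)) z (h2 z hz1) hzm
      · intro z hz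
        rw [Walk.support_append, Walk.support_cons, List.tail_cons, List.mem_append] at hz
        rcases hz with hz | hz
        · exact ⟨k, by simp, h2 z hz⟩
        · obtain ⟨m, hm, hzm⟩ := hc2 z hz
          exact ⟨m, List.mem_cons_of_mem _ hm, hzm⟩
      · rw [walkWeight_append, walkWeight_cons, h3, hc3, ← hCww]
        show _ = (Aw k p + Iw k + Bww k k') + Cww k k' + msum Aw Iw Bww Cww k (k' :: t) f
        ring
      · rw [Walk.length_append, Walk.length_cons]
        simp only [List.length_cons] at hc4 ⊢
        omega
  -- get the abstract zero-sum cyclic list and close the cycle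
  obtain ⟨L, hLnd, hLlen, hLbd, hLsum⟩ := exists_zero_cycSum hq g
  cases L with
  | nil => simp at hLlen
  | cons k₀ l₀ =>
    have hk₀ : k₀ < 2 * q - 1 := hLbd k₀ (by simp)
    have hemem : (k₀ :: l₀).getLastD 0 ∈ k₀ :: l₀ := getLastD_mem l₀ k₀ 0
    have helt : (k₀ :: l₀).getLastD 0 < 2 * q - 1 := hLbd _ hemem
    obtain ⟨wc, hc1, hc2, hc3, hc4⟩ := chainP l₀ k₀ ((k₀ :: l₀).getLastD 0) k₀ hLnd hLbd
    have hlen2 : 2 ≤ wc.length := le_trans hLlen hc4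
    have hclose : G.Adj (yout eu ((k₀ :: l₀).getLastD 0) k₀)
        (xin ev k₀ ((k₀ :: l₀).getLastD 0)) := hconn2 _ _ helt hk₀
    refine ⟨_, Walk.cons hclose wc, ?_, ?_⟩
    · exact (Walk.cons_isCycle_iff wc hclose).mpr
        ⟨hc1, closing_not_mem_edges wc hc1 hlen2⟩
    · rw [walkWeight_cons, hc3,
        msum_eq_pathSum Aw Iw Bww Cww g hg l₀ k₀ ((k₀ :: l₀).getLastD 0) k₀]
      have hcyc : pathSum g (k₀ :: l₀) + g ((k₀ :: l₀).getLastD 0) k₀ = 0 := hLsum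
      rw [hg] at hcyc
      rw [← hCww]
      linear_combination hcyc

end Graph

end ZeroSumAux

/-- For every prime `q`, every graph containing `K_{4q-2}` as a minor, with edges
weighted by elements of `ℤ/q`, contains a cycle whose total weight is `0` modulo `q`. -/
theorem zero_weight_cycle_of_clique_minor_prime
    (q : ℕ) (hq : q.Prime) (V : Type) [Fintype V] (G : SimpleGraph V)
    (w : V → V → ZMod q) (hw : ∀ u v : V, w u v = w v u)
    (hG : HasCliqueMinor G (4 * q - 2)) :
    ∃ (u : V) (c : G.Walk u u), c.IsCycle ∧ walkWeight w c = 0 := by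
  classical
  obtain ⟨B, hne, hconn, hdisj, hadj⟩ := hG
  have hq2 : 2 ≤ q := hq.two_le
  have hNpos : 0 < 4 * q - 2 := by omega
  -- choose edges between distinct branch sets
  have hadj2 : ∀ i j : Fin (4 * q - 2), ∃ a b : V, a ∈ B i ∧ b ∈ B j ∧
      (i ≠ j → G.Adj a b) := by
    intro i j
    by_cases h : i = j
    · obtain ⟨a, ha⟩ := hne i
      obtain ⟨b, hb⟩ := hne j
      exact ⟨a, b, ha, hb, fun hij => absurd h hij⟩
    · obtain ⟨a, ha, b, hb, hab⟩ := hadj i j h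
      exact ⟨a, b, ha, hb, fun _ => hab⟩
  choose euF evF heuF hevF heuvF using hadj2
  -- choose paths inside branch sets
  have hpathF : ∀ (i : Fin (4 * q - 2)) (x y : V), x ∈ B i → y ∈ B i →
      ∃ p : G.Walk x y, p.IsPath ∧ ∀ z ∈ p.support, z ∈ B i := by
    intro i x y hx hy
    have hr : (G.induce (B i)).Reachable ⟨x, hx⟩ ⟨y, hy⟩ := (hconn i).preconnected _ _
    obtain ⟨p0⟩ := hr
    let p1 : (G.induce (B i)).Walk ⟨x, hx⟩ ⟨y, hy⟩ := p0.toPath.val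
    have hp1 : p1.IsPath := p0.toPath.2
    refine ⟨p1.map (SimpleGraph.Embedding.induce (B i)).toHom, ?_, ?_⟩
    · exact Walk.map_isPath_of_injective Subtype.val_injective hp1
    · intro z hz
      have hz : z ∈ (p1.map (SimpleGraph.Embedding.induce (B i)).toHom).support := hz
      rw [Walk.support_map] at hz
      obtain ⟨z', _, rfl⟩ := List.mem_map.mp hz
      exact z'.2
  choose pthF hpthPF hpthSF using hpathF
  -- reindex by ℕ
  let fn : ℕ → Fin (4 * q - 2) := fun i => ⟨i % (4 * q - 2), Nat.mod_lt _ hNpos⟩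
  have hfin : ∀ i, i < 4 * q - 2 → ((fn i : Fin (4 * q - 2)) : ℕ) = i :=
    fun i hi => Nat.mod_eq_of_lt hi
  have hfne : ∀ i j, i < 4 * q - 2 → j < 4 * q - 2 → i ≠ j → fn i ≠ fn j := by
    intro i j hi hj hij hcontra
    apply hij
    have h := congrArg Fin.val hcontra
    rwa [hfin i hi, hfin j hj] at h
  exact ZeroSumAux.graph_side hq w (fun i => B (fn i)) (fun i j => euF (fn i) (fn j))
    (fun i j => evF (fn i) (fn j))
    (fun i j hi hj hij => hdisj (fn i) (fn j) (hfne i j hi hj hij))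
    (fun i j => heuF (fn i) (fn j)) (fun i j => hevF (fn i) (fn j))
    (fun i j hi hj hij => heuvF (fn i) (fn j) (hfne i j hi hj hij))
    (fun i x y hx hy => pthF (fn i) x y hx hy)
    (fun i x y hx hy => hpthPF (fn i) x y hx hy)
    (fun i x y hx hy => hpthSF (fn i) x y hx hy)
end

section
/- For every positive integers f and q, there exists a graph G of maximum degree 3 that contains the complete graph K_f as a minor and in which every path between two vertices of degree 3 has length divisible by q. Consequently, such a graph G contains no subdivision of any graph H with maximum degree greater than 3. -/
open SimpleGraph

/-- `G` contains a subdivision of `H`: there is an injective choice of branch vertices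
and, for each edge of `H`, a path in `G` between the corresponding branch vertices whose
internal vertices avoid all branch vertices, paths corresponding to distinct edges of
`H` being internally disjoint. -/
def HasSubdivision {W V : Type*} (H : SimpleGraph W) (G : SimpleGraph V) : Prop :=
  ∃ b : W → V, Function.Injective b ∧
    ∃ P : ∀ ⦃u v : W⦄, H.Adj u v → G.Walk (b u) (b v),
      (∀ ⦃u v : W⦄ (h : H.Adj u v), (P h).IsPath) ∧
      (∀ ⦃u v : W⦄ (h : H.Adj u v), P h.symm = (P h).reverse) ∧
      (∀ ⦃u v : W⦄ (h : H.Adj u v), ∀ x ∈ (P h).support,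
        x ≠ b u → x ≠ b v → ∀ z : W, x ≠ b z) ∧
      (∀ ⦃u v u' v' : W⦄ (h : H.Adj u v) (h' : H.Adj u' v'), s(u, v) ≠ s(u', v') →
        ∀ x ∈ (P h).support, x ∈ (P h').support → x = b u ∨ x = b v)


namespace CMAux

abbrev BV (m : ℕ) := Fin m × Fin m

def enc {m : ℕ} (a : BV m) : ℕ := a.2.val + m * a.1.val

lemma enc_lt_row {m : ℕ} {a b : BV m} (h1 : a.1 = b.1) (h2 : a.2.val < b.2.val) :
    enc a < enc b := by
  unfold enc; rw [h1]; omega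

lemma enc_lt_row_iff {m : ℕ} {a b : BV m} (h1 : a.1 = b.1) :
    enc a < enc b ↔ a.2.val < b.2.val := by
  unfold enc; rw [h1]; omega

lemma enc_lt_of_fst_lt {m : ℕ} {a b : BV m} (h : a.1.val < b.1.val) : enc a < enc b :=
  calc enc a = a.2.val + m * a.1.val := rfl
  _ < m + m * a.1.val := Nat.add_lt_add_right a.2.isLt _
  _ = m * (a.1.val + 1) := by ring
  _ ≤ m * b.1.val := Nat.mul_le_mul_left m h
  _ ≤ b.2.val + m * b.1.val := Nat.le_add_left _ _
  _ = enc b := rfl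

lemma enc_inj {m : ℕ} : Function.Injective (enc (m := m)) := by
  intro a b h
  have h1 : a.1 = b.1 := by
    by_contra hne
    have hne' : a.1.val ≠ b.1.val := fun hv => hne (Fin.ext hv)
    rcases Nat.lt_or_ge a.1.val b.1.val with hlt | hge
    · exact absurd h (Nat.ne_of_lt (enc_lt_of_fst_lt hlt))
    · exact absurd h.symm (Nat.ne_of_lt (enc_lt_of_fst_lt (lt_of_le_of_ne hge (Ne.symm hne'))))
  have h2 : a.2 = b.2 := by
    have hv : a.2.val = b.2.val := by
      unfold enc at h; rw [h1] at h; exact Nat.add_right_cancel h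
    exact Fin.ext hv
  exact Prod.ext h1 h2

def Badj {m : ℕ} (a b : BV m) : Prop :=
  (a.1 = b.1 ∧ (a.2.val + 1 = b.2.val ∨ b.2.val + 1 = a.2.val)) ∨
  (a.1 = b.2 ∧ a.2 = b.1 ∧ a.1 ≠ a.2)

lemma Badj.symm' {m : ℕ} {a b : BV m} : Badj a b → Badj b a := by
  rintro (⟨h1, h2⟩ | ⟨h1, h2, h3⟩)
  · exact Or.inl ⟨h1.symm, h2.symm⟩
  · exact Or.inr ⟨h2.symm, h1.symm, fun he => h3 (h1.trans (he.symm.trans h2.symm))⟩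

lemma Badj.ne {m : ℕ} {a b : BV m} (h : Badj a b) : a ≠ b := by
  rintro rfl
  rcases h with ⟨h1, h2⟩ | ⟨h1, h2, h3⟩
  · omega
  · exact h3 h1

abbrev Vt (m Q : ℕ) := BV m ⊕ (BV m × BV m × Fin (Q - 1))

def lClause (m Q : ℕ) (a : BV m) (e : BV m × BV m × Fin (Q - 1)) : Prop :=
  Badj e.1 e.2.1 ∧ enc e.1 < enc e.2.1 ∧
    ((a = e.1 ∧ e.2.2.val = 0) ∨ (a = e.2.1 ∧ e.2.2.val + 2 = Q))

def Gadj (m Q : ℕ) : Vt m Q → Vt m Q → Prop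
  | .inl _, .inl _ => False
  | .inl a, .inr e => lClause m Q a e
  | .inr e, .inl a => lClause m Q a e
  | .inr e, .inr e' => e.1 = e'.1 ∧ e.2.1 = e'.2.1 ∧ Badj e.1 e.2.1 ∧ enc e.1 < enc e.2.1 ∧
      (e.2.2.val + 1 = e'.2.2.val ∨ e'.2.2.val + 1 = e.2.2.val)

def G (m Q : ℕ) : SimpleGraph (Vt m Q) where
  Adj u v := Gadj m Q u v
  symm := by
    constructor
    rintro (a | e) (b | e') h
    · exact h.elim
    · exact h
    · exact h
    · obtain ⟨h1, h2, h3, h4, h5⟩ := h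
      exact ⟨h1.symm, h2.symm, h1 ▸ h2 ▸ h3, h1 ▸ h2 ▸ h4, h5.symm⟩
  loopless := by
    constructor
    rintro (a | e) h
    · exact h
    · obtain ⟨_, _, _, _, h5⟩ := h; omega

lemma G_adj (m Q : ℕ) (u v : Vt m Q) : (G m Q).Adj u v ↔ Gadj m Q u v := Iff.rfl

lemma adj_of_lClause {m Q : ℕ} {a : BV m} {e : BV m × BV m × Fin (Q - 1)}
    (h : lClause m Q a e) : (G m Q).Adj (.inl a) (.inr e) := h

def prevV (m Q : ℕ) (x y : BV m) (k : Fin (Q - 1)) : Vt m Q :=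
  if h : k.val = 0 then .inl x else .inr (x, y, ⟨k.val - 1, by have := k.isLt; omega⟩)

def nxtV (m Q : ℕ) (x y : BV m) (k : Fin (Q - 1)) : Vt m Q :=
  if h : k.val + 2 = Q then .inl y else .inr (x, y, ⟨k.val + 1, by have := k.isLt; omega⟩)

lemma adj_inl {m Q : ℕ} {a : BV m} {w : Vt m Q} (h : (G m Q).Adj (.inl a) w) :
    ∃ e, w = .inr e ∧ lClause m Q a e := by
  rw [G_adj] at h
  cases w with
  | inl b => exact h.elim
  | inr e => exact ⟨e, rfl, h⟩

lemma adj_inr {m Q : ℕ} {x y : BV m} {k : Fin (Q - 1)} {w : Vt m Q}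
    (h : (G m Q).Adj (.inr (x, y, k)) w) :
    Badj x y ∧ enc x < enc y ∧ (w = prevV m Q x y k ∨ w = nxtV m Q x y k) := by
  rw [G_adj] at h
  cases w with
  | inl a =>
    obtain ⟨h1, h2, ⟨rfl, h3⟩ | ⟨rfl, h3⟩⟩ := h
    · exact ⟨h1, h2, Or.inl (by rw [prevV, dif_pos h3])⟩
    · exact ⟨h1, h2, Or.inr (by rw [nxtV, dif_pos h3])⟩
  | inr e =>
    obtain ⟨x', y', k'⟩ := e
    obtain ⟨h1, h2, h3, h4, h5 | h5⟩ := h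
    · refine ⟨h3, h4, Or.inr ?_⟩
      rw [nxtV, dif_neg (by have := k'.isLt; simp at h1 h2 h5 ⊢; omega)]
      simp only [Sum.inr.injEq, Prod.mk.injEq] at h1 h2 ⊢
      exact ⟨h1.symm, h2.symm, Fin.ext (by simp at h5 ⊢; omega)⟩
    · refine ⟨h3, h4, Or.inl ?_⟩
      rw [prevV, dif_neg (by simp at h5; omega)]
      simp only [Sum.inr.injEq, Prod.mk.injEq] at h1 h2 ⊢
      exact ⟨h1.symm, h2.symm, Fin.ext (by simp at h5 ⊢; omega)⟩


lemma adj_inl_inr0 {m Q : ℕ} (hQ : 2 ≤ Q) {x y : BV m} (hxy : Badj x y) (hs : enc x < enc y) :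
    (G m Q).Adj (.inl x) (.inr (x, y, ⟨0, by omega⟩)) :=
  adj_of_lClause ⟨hxy, hs, Or.inl ⟨rfl, rfl⟩⟩

lemma adj_inr_last {m Q : ℕ} (hQ : 2 ≤ Q) {x y : BV m} (hxy : Badj x y) (hs : enc x < enc y) :
    (G m Q).Adj (.inr (x, y, ⟨Q - 2, by omega⟩)) (.inl y) :=
  show lClause m Q y (x, y, ⟨Q - 2, by omega⟩) from
    ⟨hxy, hs, Or.inr ⟨rfl, by show Q - 2 + 2 = Q; omega⟩⟩

lemma adj_inr_succ {m Q : ℕ} {x y : BV m} (hxy : Badj x y) (hs : enc x < enc y)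
    {k : ℕ} (hk : k + 1 < Q - 1) :
    (G m Q).Adj (.inr (x, y, ⟨k, by omega⟩)) (.inr (x, y, ⟨k + 1, hk⟩)) :=
  ⟨rfl, rfl, hxy, hs, Or.inl rfl⟩

lemma forcing (m Q : ℕ) (hQ : 2 ≤ Q) :
    ∀ n : ℕ, ∀ (u v : Vt m Q) (p : (G m Q).Walk u v), p.length = n → p.IsPath →
    ∀ b : BV m, v = .inl b →
    ((∀ a : BV m, u = .inl a → Q ∣ n) ∧
     (∀ (x y : BV m) (k : Fin (Q - 1)), u = .inr (x, y, k) →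
        prevV m Q x y k ∉ p.support → Q ∣ n + k.val + 1) ∧
     (∀ (x y : BV m) (k : Fin (Q - 1)), u = .inr (x, y, k) →
        nxtV m Q x y k ∉ p.support → Q ∣ n + (Q - k.val - 1))) := by
  intro n
  induction n using Nat.strong_induction_on with
  | _ n IH =>
    intro u v p hlen hp b hv
    cases p with
    | nil =>
      subst hv
      refine ⟨fun a ha => by simp [← hlen], fun x y k hu _ => ?_, fun x y k hu _ => ?_⟩ <;>
        simp at hu
    | @cons u w v h p' =>
      rw [Walk.cons_isPath_iff] at hp
      simp only [Walk.length_cons] at hlen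
      have IH' := IH p'.length (by omega) w v p' rfl hp.1 b hv
      refine ⟨?_, ?_, ?_⟩
      · rintro a rfl
        obtain ⟨⟨x, y, k⟩, rfl, h1, h2, hcase⟩ := adj_inl h
        rcases hcase with ⟨rfl, h3⟩ | ⟨rfl, h3⟩
        · have h3' : k.val = 0 := h3
          have hprev : prevV m Q a y k ∉ p'.support := by
            rw [prevV, dif_pos h3']; exact hp.2
          obtain ⟨c, hc⟩ := IH'.2.1 a y k rfl hprev
          exact ⟨c, by omega⟩
        · have h3' : k.val + 2 = Q := h3
          have hnxt : nxtV m Q x a k ∉ p'.support := by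
            rw [nxtV, dif_pos h3']; exact hp.2
          obtain ⟨c, hc⟩ := IH'.2.2 x a k rfl hnxt
          have := k.isLt
          exact ⟨c, by omega⟩
      · rintro x y k rfl hprev
        obtain ⟨hB, hs, hw | hw⟩ := adj_inr h
        · exact absurd (List.mem_cons_of_mem _ (hw ▸ p'.start_mem_support) :
            _ ∈ (Walk.cons h p').support) hprev
        · by_cases hkQ : k.val + 2 = Q
          · have hwy : w = Sum.inl y := hw.trans (by rw [nxtV, dif_pos hkQ])
            obtain ⟨c, hc⟩ := IH'.1 y hwy
            refine ⟨c + 1, ?_⟩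
            rw [Nat.mul_succ]
            omega
          · have hk1 : k.val + 1 < Q - 1 := by have := k.isLt; omega
            have hwk : w = Sum.inr (x, y, ⟨k.val + 1, hk1⟩) :=
              hw.trans (by rw [nxtV, dif_neg hkQ])
            have hkk : prevV m Q x y ⟨k.val + 1, hk1⟩ = .inr (x, y, k) := by
              have hne : (⟨k.val + 1, hk1⟩ : Fin (Q - 1)).val ≠ 0 := Nat.succ_ne_zero _
              rw [prevV, dif_neg hne]
              have : ((⟨k.val + 1, hk1⟩ : Fin (Q - 1)).val - 1) = k.val := rfl
              congr 1
            obtain ⟨c, hc⟩ := IH'.2.1 x y _ hwk (hkk ▸ hp.2)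
            have hc' : p'.length + ((⟨k.val + 1, hk1⟩ : Fin (Q - 1)).val) + 1 = Q * c := hc
            have hc'' : p'.length + (k.val + 1) + 1 = Q * c := hc'
            exact ⟨c, by omega⟩
      · rintro x y k rfl hnxt
        obtain ⟨hB, hs, hw | hw⟩ := adj_inr h
        swap
        · exact absurd (List.mem_cons_of_mem _ (hw ▸ p'.start_mem_support) :
            _ ∈ (Walk.cons h p').support) hnxt
        · by_cases hk0 : k.val = 0
          · have hwx : w = Sum.inl x := hw.trans (by rw [prevV, dif_pos hk0])
            obtain ⟨c, hc⟩ := IH'.1 x hwx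
            have := k.isLt
            refine ⟨c + 1, ?_⟩
            rw [Nat.mul_succ]
            omega
          · have hk1 : k.val - 1 < Q - 1 := by have := k.isLt; omega
            have hwk : w = Sum.inr (x, y, ⟨k.val - 1, hk1⟩) :=
              hw.trans (by rw [prevV, dif_neg hk0])
            have hkk : nxtV m Q x y ⟨k.val - 1, hk1⟩ = .inr (x, y, k) := by
              have hne : (⟨k.val - 1, hk1⟩ : Fin (Q - 1)).val + 2 ≠ Q := by
                have := k.isLt
                have h2 : (⟨k.val - 1, hk1⟩ : Fin (Q - 1)).val = k.val - 1 := rfl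
                omega
              rw [nxtV, dif_neg hne]
              have h3 : ((⟨k.val - 1, hk1⟩ : Fin (Q - 1)).val + 1) = k.val := by
                have h2 : (⟨k.val - 1, hk1⟩ : Fin (Q - 1)).val = k.val - 1 := rfl
                omega
              congr 1
              exact Prod.ext rfl (Prod.ext rfl (Fin.ext h3))
            obtain ⟨c, hc⟩ := IH'.2.2 x y _ hwk (hkk ▸ hp.2)
            have hc' : p'.length + (Q - (⟨k.val - 1, hk1⟩ : Fin (Q - 1)).val - 1) = Q * c := hc
            have hc'' : p'.length + (Q - (k.val - 1) - 1) = Q * c := hc'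
            have := k.isLt
            exact ⟨c, by omega⟩

lemma ncard_inr_le (m Q : ℕ) (e : BV m × BV m × Fin (Q - 1)) :
    ((G m Q).neighborSet (.inr e)).ncard ≤ 2 := by
  obtain ⟨x, y, k⟩ := e
  have hsub : (G m Q).neighborSet (.inr (x, y, k)) ⊆ {prevV m Q x y k, nxtV m Q x y k} := by
    intro w hw
    rcases (adj_inr hw).2.2 with h | h <;> simp [h]
  calc ((G m Q).neighborSet (.inr (x, y, k))).ncard
      ≤ ({prevV m Q x y k, nxtV m Q x y k} : Set (Vt m Q)).ncard :=
        Set.ncard_le_ncard hsub (Set.toFinite _)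
    _ ≤ ({nxtV m Q x y k} : Set (Vt m Q)).ncard + 1 := Set.ncard_insert_le _ _
    _ ≤ 2 := by rw [Set.ncard_singleton]

/-- candidate neighbours of a left vertex -/
def c1 (m Q : ℕ) (hQ : 2 ≤ Q) (a : BV m) : Vt m Q :=
  .inr ((a.1, ⟨a.2.val - 1, lt_of_le_of_lt (Nat.sub_le _ _) a.2.isLt⟩), a, ⟨Q - 2, by omega⟩)
def c2 (m Q : ℕ) (hQ : 2 ≤ Q) (a : BV m) : Vt m Q :=
  .inr (a, (a.1, ⟨(a.2.val + 1) % m, Nat.mod_lt _ (lt_of_le_of_lt (Nat.zero_le _) a.2.isLt)⟩),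
    ⟨0, by omega⟩)
def c3 (m Q : ℕ) (hQ : 2 ≤ Q) (a : BV m) : Vt m Q :=
  if enc a < enc (a.2, a.1) then .inr (a, (a.2, a.1), ⟨0, by omega⟩)
  else .inr ((a.2, a.1), a, ⟨Q - 2, by omega⟩)

lemma nbhd_inl_subset (m Q : ℕ) (hQ : 2 ≤ Q) (a : BV m) :
    (G m Q).neighborSet (.inl a) ⊆ {c1 m Q hQ a, c2 m Q hQ a, c3 m Q hQ a} := by
  intro w hw
  simp only [Set.mem_insert_iff, Set.mem_singleton_iff]
  obtain ⟨⟨x, y, k⟩, rfl, hB, hs, hcase⟩ := adj_inl hw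
  rcases hcase with ⟨rfl, h3⟩ | ⟨rfl, h3⟩
  · have h3' : k.val = 0 := h3
    have hk : k = ⟨0, by omega⟩ := Fin.ext h3'
    rw [hk]
    rcases hB with ⟨hr1, hr2 | hr2⟩ | ⟨hc1, hc2, hc3⟩
    · refine Or.inr (Or.inl ?_)
      rw [c2]
      have hy : y = (a.1, ⟨(a.2.val + 1) % m,
          Nat.mod_lt _ (lt_of_le_of_lt (Nat.zero_le _) a.2.isLt)⟩) := by
        refine Prod.ext (hr1 : a.1 = y.1).symm (Fin.ext ?_)
        have h4 := y.2.isLt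
        have h5 : a.2.val + 1 = y.2.val := hr2
        show y.2.val = (a.2.val + 1) % m
        rw [Nat.mod_eq_of_lt (by omega)]
        omega
      rw [hy]
    · exfalso
      have hs' : enc a < enc y := hs
      have hr1' : a.1 = y.1 := hr1
      have hr2' : y.2.val + 1 = a.2.val := hr2
      rw [enc_lt_row_iff hr1'] at hs'
      omega
    · refine Or.inr (Or.inr ?_)
      have hy : y = (a.2, a.1) := Prod.ext (hc2 : a.2 = y.1).symm (hc1 : a.1 = y.2).symm
      rw [hy]
      rw [c3, if_pos (hy ▸ (hs : enc a < enc y))]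
  · have h3' : k.val + 2 = Q := h3
    have hk : k = ⟨Q - 2, by omega⟩ := Fin.ext (by show k.val = Q - 2; omega)
    rw [hk]
    rcases hB with ⟨hr1, hr2 | hr2⟩ | ⟨hc1, hc2, hc3⟩
    · refine Or.inl ?_
      rw [c1]
      have hx : x = (a.1, ⟨a.2.val - 1, lt_of_le_of_lt (Nat.sub_le _ _) a.2.isLt⟩) := by
        refine Prod.ext (hr1 : x.1 = a.1) (Fin.ext ?_)
        have h5 : x.2.val + 1 = a.2.val := hr2
        show x.2.val = a.2.val - 1
        omega
      rw [hx]
    · exfalso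
      have hs' : enc x < enc a := hs
      have hr1' : x.1 = a.1 := hr1
      have hr2' : a.2.val + 1 = x.2.val := hr2
      rw [enc_lt_row_iff hr1'] at hs'
      omega
    · refine Or.inr (Or.inr ?_)
      have hx : x = (a.2, a.1) := Prod.ext (hc1 : x.1 = a.2) (hc2 : x.2 = a.1)
      rw [hx]
      rw [c3, if_neg (fun hlt => absurd (hx ▸ (hs : enc x < enc a)) (lt_asymm hlt))]

lemma ncard_inl_le (m Q : ℕ) (hQ : 2 ≤ Q) (a : BV m) :
    ((G m Q).neighborSet (.inl a)).ncard ≤ 3 := by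
  calc ((G m Q).neighborSet (.inl a)).ncard
      ≤ ({c1 m Q hQ a, c2 m Q hQ a, c3 m Q hQ a} : Set (Vt m Q)).ncard :=
        Set.ncard_le_ncard (nbhd_inl_subset m Q hQ a) (Set.toFinite _)
    _ ≤ ({c2 m Q hQ a, c3 m Q hQ a} : Set (Vt m Q)).ncard + 1 := Set.ncard_insert_le _ _
    _ ≤ 3 := by
        have h1 := Set.ncard_insert_le (c2 m Q hQ a) ({c3 m Q hQ a} : Set (Vt m Q))
        have h2 : ({c3 m Q hQ a} : Set (Vt m Q)).ncard = 1 := Set.ncard_singleton _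
        omega

lemma ncard_a0 (m Q : ℕ) (hm : 3 ≤ m) (hQ : 2 ≤ Q) :
    ((G m Q).neighborSet
      (.inl ((⟨0, by omega⟩ : Fin m), (⟨1, by omega⟩ : Fin m)))).ncard = 3 := by
  set a0 : BV m := ((⟨0, by omega⟩ : Fin m), (⟨1, by omega⟩ : Fin m)) with ha0
  have e1 : a0.1.val = 0 := rfl
  have e2 : a0.2.val = 1 := rfl
  have hcond : enc a0 < enc (a0.2, a0.1) := by
    show a0.2.val + m * a0.1.val < a0.1.val + m * a0.2.val
    rw [e1, e2]
    simp
    omega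
  have hc3 : c3 m Q hQ a0 = .inr (a0, (a0.2, a0.1), ⟨0, by omega⟩) := if_pos hcond
  have hadj1 : (G m Q).Adj (.inl a0) (c1 m Q hQ a0) := by
    apply adj_of_lClause
    refine ⟨Or.inl ⟨rfl, Or.inl ?_⟩, ?_, Or.inr ⟨rfl, by show Q - 2 + 2 = Q; omega⟩⟩
    · show (a0.2.val - 1) + 1 = a0.2.val
      rw [e2]
    · show a0.2.val - 1 + m * a0.1.val < a0.2.val + m * a0.1.val
      rw [e1, e2]
      simp
  have hadj2 : (G m Q).Adj (.inl a0) (c2 m Q hQ a0) := by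
    apply adj_of_lClause
    refine ⟨Or.inl ⟨rfl, Or.inl ?_⟩, ?_, Or.inl ⟨rfl, rfl⟩⟩
    · show a0.2.val + 1 = (a0.2.val + 1) % m
      rw [e2, Nat.mod_eq_of_lt (by omega)]
    · show a0.2.val + m * a0.1.val < (a0.2.val + 1) % m + m * a0.1.val
      rw [e1, e2, Nat.mod_eq_of_lt (by omega)]
      omega
  have hadj3 : (G m Q).Adj (.inl a0) (c3 m Q hQ a0) := by
    rw [hc3]
    apply adj_of_lClause
    refine ⟨Or.inr ⟨rfl, rfl, ?_⟩, hcond, Or.inl ⟨rfl, rfl⟩⟩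
    intro h
    have := congrArg Fin.val h
    rw [e1, e2] at this
    omega
  have hseteq : (G m Q).neighborSet (.inl a0) = {c1 m Q hQ a0, c2 m Q hQ a0, c3 m Q hQ a0} := by
    refine subset_antisymm (nbhd_inl_subset m Q hQ a0) ?_
    intro w hw
    rcases hw with rfl | rfl | rfl
    · exact hadj1
    · exact hadj2
    · exact hadj3
  rw [hseteq]
  rw [Set.ncard_eq_three]
  refine ⟨_, _, _, ?_, ?_, ?_, rfl⟩
  · rw [c1, c2]
    intro h
    have := congrArg (fun z => match z with | Sum.inr e => e.1.2.val | Sum.inl _ => 0) h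
    simp only at this
    omega
  · rw [c1, hc3]
    intro h
    have := congrArg (fun z => match z with | Sum.inr e => e.1.2.val | Sum.inl _ => 0) h
    simp only at this
    omega
  · rw [c2, hc3]
    intro h
    have := congrArg (fun z => match z with | Sum.inr e => e.2.1.1.val | Sum.inl _ => 0) h
    simp only at this
    omega

def Bset (m Q : ℕ) (c : Fin m) : Set (Vt m Q) :=
  {w | match w with
       | .inl a => a.1 = c
       | .inr e => Badj e.1 e.2.1 ∧ enc e.1 < enc e.2.1 ∧ e.1.1 = c}

lemma mem_Bset_inl {m Q : ℕ} {c : Fin m} {a : BV m} :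
    (Sum.inl a : Vt m Q) ∈ Bset m Q c ↔ a.1 = c := Iff.rfl

lemma mem_Bset_inr {m Q : ℕ} {c : Fin m} {x y : BV m} {k : Fin (Q - 1)} :
    (Sum.inr (x, y, k) : Vt m Q) ∈ Bset m Q c ↔ Badj x y ∧ enc x < enc y ∧ x.1 = c := Iff.rfl

lemma chainReach (m Q : ℕ) (hQ : 2 ≤ Q) {c : Fin m} {x y : BV m}
    (hB : Badj x y) (hs : enc x < enc y) (hx : x.1 = c) :
    ∀ kv : ℕ, ∀ hk : kv < Q - 1,
      ((G m Q).induce (Bset m Q c)).Reachable ⟨.inl x, hx⟩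
        ⟨.inr (x, y, ⟨kv, hk⟩), ⟨hB, hs, hx⟩⟩ := by
  intro kv
  induction kv with
  | zero =>
    intro hk
    exact Adj.reachable (by exact adj_inl_inr0 hQ hB hs)
  | succ kv ih =>
    intro hk
    refine (ih (by omega)).trans (Adj.reachable ?_)
    exact adj_inr_succ hB hs hk

lemma rowReach (m Q : ℕ) (hQ : 2 ≤ Q) (hm : 0 < m) (c : Fin m) :
    ∀ jv : ℕ, ∀ hj : jv < m,
      ((G m Q).induce (Bset m Q c)).Reachable ⟨.inl (c, ⟨0, hm⟩), rfl⟩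
        ⟨.inl (c, ⟨jv, hj⟩), rfl⟩ := by
  intro jv
  induction jv with
  | zero => intro hj; exact Reachable.refl _
  | succ jv ih =>
    intro hj
    have hB : Badj (m := m) (c, ⟨jv, by omega⟩) (c, ⟨jv + 1, hj⟩) :=
      Or.inl ⟨rfl, Or.inl rfl⟩
    have hs : enc (m := m) (c, ⟨jv, by omega⟩) < enc (c, ⟨jv + 1, hj⟩) := by
      show jv + m * c.val < (jv + 1) + m * c.val
      omega
    refine ((ih (by omega)).trans ((chainReach m Q hQ hB hs rfl (Q - 2) (by omega)).trans
      (Adj.reachable ?_)))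
    exact adj_inr_last hQ hB hs

lemma BsetConnected (m Q : ℕ) (hQ : 2 ≤ Q) (hm : 0 < m) (c : Fin m) :
    ((G m Q).induce (Bset m Q c)).Connected := by
  rw [connected_iff]
  refine ⟨?_, ⟨⟨.inl (c, ⟨0, hm⟩), rfl⟩⟩⟩
  have key : ∀ z : (Bset m Q c : Set (Vt m Q)),
      ((G m Q).induce (Bset m Q c)).Reachable ⟨.inl (c, ⟨0, hm⟩), rfl⟩ z := by
    rintro ⟨(a | ⟨x, y, k⟩), hz⟩
    · have ha : a.1 = c := hz
      obtain ⟨a1, a2⟩ := a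
      have ha' : a1 = c := ha
      subst ha'
      exact rowReach m Q hQ hm a1 a2.val a2.isLt
    · obtain ⟨hB, hs, hx⟩ := hz
      have h1 := chainReach m Q hQ (c := c) hB hs hx k.val k.isLt
      have h2 : ((G m Q).induce (Bset m Q c)).Reachable ⟨.inl (c, ⟨0, hm⟩), rfl⟩
          ⟨.inl x, hx⟩ := by
        obtain ⟨x1, x2⟩ := x
        have hx' : x1 = c := hx
        subst hx'
        exact rowReach m Q hQ hm x1 x2.val x2.isLt
      exact h2.trans h1
  intro u v
  exact (key u).symm.trans (key v)

lemma no_subdiv {V W : Type} [Finite V] (G : SimpleGraph V)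
    (hdeg : ∀ v : V, (G.neighborSet v).ncard ≤ 3) (H : SimpleGraph W)
    (hx : ∃ x : W, 4 ≤ (H.neighborSet x).ncard) : ¬ HasSubdivision H G := by
  classical
  rintro ⟨b, hb, P, hpath, _, _, hdisj⟩
  obtain ⟨x, hx4⟩ := hx
  -- second vertex of the path corresponding to an edge
  set Φ : W → V := fun y => if h : H.Adj x y then (P h).getVert 1 else b x with hΦ
  have hlen : ∀ {y : W} (h : H.Adj x y), 0 < (P h).length := by
    intro y h
    rcases Nat.eq_zero_or_pos (P h).length with hl | hl
    · exact absurd (hb (Walk.eq_of_length_eq_zero hl)) h.ne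
    · exact hl
  have hΦadj : ∀ {y : W} (h : H.Adj x y), G.Adj (b x) (Φ y) := by
    intro y h
    have := (P h).adj_getVert_succ (i := 0) (hlen h)
    rw [Walk.getVert_zero] at this
    simpa [hΦ, dif_pos h] using this
  have hmaps : ∀ y ∈ H.neighborSet x, Φ y ∈ G.neighborSet (b x) := fun y hy => hΦadj hy
  have hinj : Set.InjOn Φ (H.neighborSet x) := by
    intro y hy y' hy' heq
    by_contra hne
    have hy : H.Adj x y := hy
    have hy' : H.Adj x y' := hy'
    have hsne : s(x, y) ≠ s(x, y') := by
      intro hs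
      replace hs := (Sym2.mk_eq_mk_iff (p := (x, y)) (q := (x, y'))).mp hs
      rcases hs with h | h
      · exact hne (congrArg Prod.snd h)
      · exact hy'.ne (congrArg Prod.fst h)
    have hmem : Φ y ∈ (P hy).support := by
      rw [hΦ]; simp only [dif_pos hy]
      rw [Walk.mem_support_iff_exists_getVert]
      exact ⟨1, rfl, hlen hy⟩
    have hmem' : Φ y' ∈ (P hy').support := by
      rw [hΦ]; simp only [dif_pos hy']
      rw [Walk.mem_support_iff_exists_getVert]
      exact ⟨1, rfl, hlen hy'⟩
    have hnbx : ∀ {z : W} (hz : H.Adj x z), Φ z ≠ b x := by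
      intro z hz hzz
      exact G.loopless.irrefl _ (hzz ▸ hΦadj hz)
    have h1 := hdisj hy hy' hsne (Φ y) hmem (heq ▸ hmem')
    have h2 := hdisj hy' hy (Ne.symm hsne) (Φ y') hmem' (heq ▸ hmem)
    rcases h1 with h1 | h1
    · exact hnbx hy h1
    · rcases h2 with h2 | h2
      · exact hnbx hy' h2
      · exact hne (hb (h1 ▸ h2 ▸ heq))
  have := Set.ncard_le_ncard_of_injOn Φ hmaps hinj (Set.toFinite _)
  have h3 := hdeg (b x)
  omega

end CMAux

open CMAux in
/-- For all positive integers `f` and `q` there is a graph `G` of maximum degree `3`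
containing `K_f` as a minor in which every path between two vertices of degree `3` has
length divisible by `q`; consequently `G` contains no subdivision of any graph `H`
having a vertex of degree greater than `3`. -/
theorem exists_clique_minor_max_degree_three
    (f q : ℕ) (hf : 0 < f) (hq : 0 < q) :
    ∃ (V : Type) (_ : Fintype V) (G : SimpleGraph V),
      (∀ v : V, (G.neighborSet v).ncard ≤ 3) ∧
      (∃ v : V, (G.neighborSet v).ncard = 3) ∧
      HasCliqueMinor G f ∧
      (∀ u v : V, (G.neighborSet u).ncard = 3 → (G.neighborSet v).ncard = 3 →
        ∀ p : G.Walk u v, p.IsPath → q ∣ p.length) ∧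
      (∀ (W : Type) (H : SimpleGraph W),
        (∃ x : W, 4 ≤ (H.neighborSet x).ncard) → ¬ HasSubdivision H G) := by
  set m : ℕ := max f 3 with hm_def
  set Q : ℕ := 2 * q with hQ_def
  have hm : 3 ≤ m := le_max_right f 3
  have hm0 : 0 < m := by omega
  have hQ : 2 ≤ Q := by omega
  have hfm : f ≤ m := le_max_left f 3
  refine ⟨Vt m Q, inferInstance, G m Q, ?_, ?_, ?_, ?_, ?_⟩
  · -- max degree ≤ 3
    rintro (a | e)
    · exact ncard_inl_le m Q hQ a
    · exact le_trans (ncard_inr_le m Q e) (by norm_num)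
  · -- a vertex of degree 3
    exact ⟨_, ncard_a0 m Q hm hQ⟩
  · -- K_f minor
    refine ⟨fun i => Bset m Q (Fin.castLE hfm i), ?_, ?_, ?_, ?_⟩
    · intro i
      exact ⟨.inl (Fin.castLE hfm i, ⟨0, hm0⟩), rfl⟩
    · intro i
      exact BsetConnected m Q hQ hm0 _
    · intro i j hij
      rw [Set.disjoint_left]
      rintro (a | ⟨x, y, k⟩) h1 h2
      · exact hij (Fin.castLE_injective _ ((h1 : a.1 = _).symm.trans (h2 : a.1 = _)))
      · exact hij (Fin.castLE_injective _
          (((mem_Bset_inr.mp h1).2.2).symm.trans ((mem_Bset_inr.mp h2).2.2)))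
    · intro i j hij
      have hne : Fin.castLE hfm i ≠ Fin.castLE hfm j := fun h => hij (Fin.castLE_injective _ h)
      set a : BV m := (Fin.castLE hfm i, Fin.castLE hfm j) with ha
      set b : BV m := (Fin.castLE hfm j, Fin.castLE hfm i) with hb
      have hBab : Badj a b := Or.inr ⟨rfl, rfl, hne⟩
      have henc : enc a ≠ enc b := fun h => (Badj.ne hBab) (enc_inj h)
      rcases lt_or_gt_of_ne henc with hlt | hgt
      · exact ⟨.inr (a, b, ⟨Q - 2, by omega⟩), ⟨hBab, hlt, rfl⟩, .inl b, rfl,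
          adj_inr_last hQ hBab hlt⟩
      · exact ⟨.inl a, rfl, .inr (b, a, ⟨Q - 2, by omega⟩), ⟨hBab.symm', hgt, rfl⟩,
          (adj_inr_last hQ hBab.symm' hgt).symm⟩
  · -- path lengths divisible by q
    intro u v h3u h3v p hp
    obtain ⟨a, rfl⟩ : ∃ a, u = Sum.inl a := by
      cases u with
      | inl a => exact ⟨a, rfl⟩
      | inr e => exact absurd h3u (by have := ncard_inr_le m Q e; omega)
    obtain ⟨b, rfl⟩ : ∃ b, v = Sum.inl b := by
      cases v with
      | inl b => exact ⟨b, rfl⟩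
      | inr e => exact absurd h3v (by have := ncard_inr_le m Q e; omega)
    have hdvd := (forcing m Q hQ p.length _ _ p rfl hp b rfl).1 a rfl
    exact dvd_trans (dvd_mul_left q 2) hdvd
  · -- no subdivision of a graph with a vertex of degree ≥ 4
    intro W H hx
    refine no_subdiv (G m Q) ?_ H hx
    rintro (a | e)
    · exact ncard_inl_le m Q hQ a
    · exact le_trans (ncard_inr_le m Q e) (by norm_num)
end
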